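/- Let Γ be a finite simple graph with positive integer vertex weights p_i and, for each edge j with endpoints a_j, b_j, a weight q_j ∈ ℤ/2. Then the graded algebra A = k⟨x_i : i ∈ V⟩/I(Γ), where I(Γ) is the two-sided ideal generated by the elements x_{a_j} x_{b_j} − (−1)^{q_j} x_{b_j} x_{a_j} for j ∈ E, has Hilbert series H_A(z) = [c_Γ(z)]^{-1}, independent of the choice of edge weights q_j. -/

import Mathlib

open scoped Classical

/-- The degree-`d` component of a quotient of the free algebra by (the
two-sided ideal generated by) a relation `rel`, with respect to the grading in
which `x_i` has degree `p i`: the span of the images of the monomials of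
weight `d`. -/
noncomputable def degCompR (k : Type*) [Field k] {n : ℕ}
    (rel : FreeAlgebra k (Fin n) → FreeAlgebra k (Fin n) → Prop)
    (p : Fin n → ℕ) (d : ℕ) : Submodule k (RingQuot rel) :=
  Submodule.span k {a | ∃ l : List (Fin n), (l.map p).sum = d ∧
    a = RingQuot.mkAlgHom k rel ((l.map (FreeAlgebra.ι k)).prod)}

/-- The Hilbert series of the quotient algebra. -/
noncomputable def hilbertSeriesR (k : Type*) [Field k] {n : ℕ}
    (rel : FreeAlgebra k (Fin n) → FreeAlgebra k (Fin n) → Prop)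
    (p : Fin n → ℕ) : PowerSeries ℤ :=
  PowerSeries.mk fun d => (Module.finrank k (degCompR k rel p d) : ℤ)

/-- The clique polynomial `c_Γ(z) = Σ_{i,j} (−1)^i c_{i,j} z^j`, where `c_{i,j}`
is the number of complete subgraphs of `Γ` with `i` vertices whose weights sum
to `j`, as a power series. -/
noncomputable def cliquePoly {n : ℕ} (G : SimpleGraph (Fin n)) (p : Fin n → ℕ) :
    PowerSeries ℤ :=
  PowerSeries.mk fun j =>
    ∑ S ∈ (Finset.univ : Finset (Fin n)).powerset.filter
        (fun S : Finset (Fin n) => G.IsClique (S : Set (Fin n))),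
      if ∑ i ∈ S, p i = j then (-1 : ℤ) ^ S.card else 0

/-- The signed commutation relations: for each edge `ab` of weight `q(ab)`,
`x_a x_b = (−1)^{q(ab)} x_b x_a`. -/
def signedRel (k : Type*) [Field k] {n : ℕ} (G : SimpleGraph (Fin n))
    (q : Sym2 (Fin n) → ZMod 2) :
    FreeAlgebra k (Fin n) → FreeAlgebra k (Fin n) → Prop := fun u v =>
  ∃ a b : Fin n, G.Adj a b ∧ u = FreeAlgebra.ι k a * FreeAlgebra.ι k b ∧
    v = ((-1 : k) ^ (q s(a, b)).val) • (FreeAlgebra.ι k b * FreeAlgebra.ι k a)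

namespace CF

variable {n : ℕ} (G : SimpleGraph (Fin n))

/-- single adjacent-swap relation on words -/
def swapRel : List (Fin n) → List (Fin n) → Prop := fun w w' =>
  ∃ u a b v, G.Adj a b ∧ w = u ++ a :: b :: v ∧ w' = u ++ b :: a :: v

/-- the trace monoid (as a plain quotient type) -/
abbrev TM := Quot (swapRel G)

def mk (l : List (Fin n)) : TM G := Quot.mk _ l

lemma mk_swap {a b : Fin n} (h : G.Adj a b) (u v : List (Fin n)) :
    mk G (u ++ a :: b :: v) = mk G (u ++ b :: a :: v) :=
  Quot.sound ⟨u, a, b, v, h, rfl, rfl⟩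

def pre (a : Fin n) : TM G → TM G :=
  Quot.map (a :: ·) (by
    rintro w w' ⟨u, c, d, v, h, rfl, rfl⟩
    exact ⟨a :: u, c, d, v, h, rfl, rfl⟩)

@[simp] lemma pre_mk (a : Fin n) (l : List (Fin n)) :
    pre G a (mk G l) = mk G (a :: l) := rfl

lemma pre_pre {a b : Fin n} (h : G.Adj a b) (m : TM G) :
    pre G a (pre G b m) = pre G b (pre G a m) := by
  induction m using Quot.ind with
  | _ l => exact mk_swap G h [] l

def letters : TM G → Multiset (Fin n) :=
  Quot.lift (fun l => (l : Multiset (Fin n))) (by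
    rintro w w' ⟨u, a, b, v, h, rfl, rfl⟩
    exact Multiset.coe_eq_coe.mpr ((List.Perm.swap b a v).append_left u))

@[simp] lemma letters_mk (l : List (Fin n)) : letters G (mk G l) = (l : Multiset (Fin n)) := rfl

@[simp] lemma letters_pre (a : Fin n) (m : TM G) :
    letters G (pre G a m) = a ::ₘ letters G m := by
  induction m using Quot.ind with
  | _ l => rfl

def wt (p : Fin n → ℕ) (m : TM G) : ℕ := ((letters G m).map p).sum

@[simp] lemma wt_mk (p : Fin n → ℕ) (l : List (Fin n)) :
    wt G p (mk G l) = (l.map p).sum := by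
  show ((Multiset.map p (l : Multiset (Fin n)))).sum = _
  simp

@[simp] lemma wt_pre (p : Fin n → ℕ) (a : Fin n) (m : TM G) :
    wt G p (pre G a m) = p a + wt G p m := by
  simp [wt]


def eraseT (a : Fin n) : TM G → TM G :=
  Quot.lift (fun l => mk G (l.erase a)) (by
    rintro w w' ⟨u, c, d, v, h, rfl, rfl⟩
    show mk G ((u ++ c :: d :: v).erase a) = mk G ((u ++ d :: c :: v).erase a)
    by_cases hu : a ∈ u
    · rw [List.erase_append_left _ hu, List.erase_append_left _ hu]
      exact mk_swap G h _ _
    · rw [List.erase_append_right _ hu, List.erase_append_right _ hu]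
      have hcd : c ≠ d := h.ne
      by_cases hac : a = c
      · subst hac
        rw [List.erase_cons_head, List.erase_cons_tail, List.erase_cons_head]
        · simp [hcd.symm]
      · by_cases had : a = d
        · subst had
          rw [List.erase_cons_head, List.erase_cons_tail, List.erase_cons_head]
          simp [Ne.symm hac]
        · rw [List.erase_cons_tail, List.erase_cons_tail, List.erase_cons_tail,
            List.erase_cons_tail]
          · exact mk_swap G h _ _
          all_goals simp [Ne.symm hac, Ne.symm had])

@[simp] lemma eraseT_mk (a : Fin n) (l : List (Fin n)) :
    eraseT G a (mk G l) = mk G (l.erase a) := rfl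

@[simp] lemma eraseT_pre (a : Fin n) (m : TM G) : eraseT G a (pre G a m) = m := by
  induction m using Quot.ind with
  | _ l => show mk G ((a :: l).erase a) = mk G l; rw [List.erase_cons_head]

/-- `a` occurs in `l` at a position before which all letters are adjacent to `a`. -/
def good (a : Fin n) (l : List (Fin n)) : Prop :=
  ∃ u v, l = u ++ a :: v ∧ ∀ b ∈ u, G.Adj a b

lemma good_of_swap {a : Fin n} {w w' : List (Fin n)} (h : swapRel G w w')
    (hg : good G a w) : good G a w' := by
  obtain ⟨s, c, d, t, hcd, rfl, rfl⟩ := h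
  obtain ⟨u, v, he, hadj⟩ := hg
  rcases List.append_eq_append_iff.mp he with ⟨a', rfl, ha'⟩ | ⟨c', hs, hc'⟩
  · -- u = s ++ a',  c :: d :: t = a' ++ a :: v
    match a', ha' with
    | [], ha' =>
      -- a = c, v = d :: t
      obtain ⟨rfl, rfl⟩ : c = a ∧ d :: t = v := by simpa using ha'
      exact ⟨s ++ [d], t, by simp, by
        intro b hb
        rcases List.mem_append.mp hb with hb | hb
        · exact hadj b (by simp [hb])
        · simp only [List.mem_singleton] at hb; subst hb; exact hcd⟩
    | [c''], ha' =>
      obtain ⟨rfl, rfl, rfl⟩ : c = c'' ∧ d = a ∧ t = v := by simpa using ha'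
      exact ⟨s, c :: t, by simp, fun b hb => hadj b (by simpa using Or.inl hb)⟩
    | c'' :: d'' :: a'', ha' =>
      obtain ⟨rfl, rfl, ht⟩ : c = c'' ∧ d = d'' ∧ t = a'' ++ a :: v := by simpa using ha'
      subst ht
      refine ⟨s ++ d :: c :: a'', v, by simp, ?_⟩
      intro b hb
      apply hadj b
      simp only [List.mem_append, List.mem_cons] at hb ⊢
      tauto
  · -- s = u ++ c', a :: v = c' ++ c :: d :: t
    match c', hc' with
    | [], hc' =>
      simp only [List.nil_append, List.cons.injEq] at hc'
      obtain ⟨rfl, rfl⟩ := hc'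
      simp only [List.append_nil] at hs
      subst hs
      refine ⟨s ++ [d], t, by simp, ?_⟩
      intro b hb
      rcases List.mem_append.mp hb with hb | hb
      · exact hadj b hb
      · simp only [List.mem_singleton] at hb; subst hb; exact hcd
    | e :: c'', hc' =>
      simp only [List.cons_append, List.cons.injEq] at hc'
      obtain ⟨rfl, rfl⟩ := hc'
      subst hs
      exact ⟨u, c'' ++ d :: c :: t, by simp, hadj⟩

lemma good_iff_of_swap {a : Fin n} {w w' : List (Fin n)} (h : swapRel G w w') :
    good G a w ↔ good G a w' := by
  constructor
  · exact good_of_swap G h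
  · refine fun hg => good_of_swap G ?_ hg
    obtain ⟨u, c, d, v, hcd, rfl, rfl⟩ := h
    exact ⟨u, d, c, v, hcd.symm, rfl, rfl⟩

/-- goodness descends to the trace monoid -/
def Good (a : Fin n) : TM G → Prop :=
  Quot.lift (good G a) (fun _ _ h => propext (good_iff_of_swap G h))

@[simp] lemma good_mk (a : Fin n) (l : List (Fin n)) : Good G a (mk G l) ↔ good G a l :=
  Iff.rfl

def Init (a : Fin n) (m : TM G) : Prop := ∃ m', m = pre G a m'

lemma init_of_good {a : Fin n} {l : List (Fin n)} (h : good G a l) :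
    Init G a (mk G l) := by
  obtain ⟨u, v, rfl, hadj⟩ := h
  induction u with
  | nil => exact ⟨mk G v, rfl⟩
  | cons c u ih =>
    obtain ⟨m', hm'⟩ := ih (fun b hb => hadj b (List.mem_cons_of_mem _ hb))
    refine ⟨pre G c m', ?_⟩
    have : mk G ((c :: u) ++ a :: v) = pre G c (mk G (u ++ a :: v)) := rfl
    rw [this, hm', pre_pre G (hadj c List.mem_cons_self)]

lemma good_of_init {a : Fin n} {l : List (Fin n)} (h : Init G a (mk G l)) :
    good G a l := by
  obtain ⟨m', hm'⟩ := h
  induction m' using Quot.ind with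
  | _ u =>
    have h2 : good G a (a :: u) := ⟨[], u, rfl, fun b hb => absurd hb List.not_mem_nil⟩
    have h3 : Good G a (pre G a (Quot.mk (swapRel G) u)) := h2
    rw [← hm'] at h3
    exact h3

lemma init_iff_good {a : Fin n} {l : List (Fin n)} :
    Init G a (mk G l) ↔ good G a l :=
  ⟨good_of_init G, init_of_good G⟩

/-- key: erasing an initial letter and putting it back -/
lemma pre_eraseT_of_init {a : Fin n} {m : TM G} (h : Init G a m) :
    pre G a (eraseT G a m) = m := by
  obtain ⟨m', rfl⟩ := h
  rw [eraseT_pre]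

/-- lemma 5: other initial letters survive erasing -/
lemma init_pre_iff {a b : Fin n} (hba : b ≠ a) (m : TM G) :
    Init G b (pre G a m) → Init G b m := by
  induction m using Quot.ind with
  | _ l =>
    intro h
    have hg : good G b (a :: l) := good_of_init G h
    obtain ⟨u, v, he, hadj⟩ := hg
    match u, he with
    | [], he =>
      simp only [List.nil_append, List.cons.injEq] at he
      exact absurd he.1.symm hba
    | c :: u, he =>
      obtain ⟨rfl, rfl⟩ : a = c ∧ l = u ++ b :: v := by simpa using he
      exact init_of_good G ⟨u, v, rfl, fun x hx => hadj x (List.mem_cons_of_mem _ hx)⟩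

/-- splitting lemma for two decompositions -/
lemma mem_or_mem_of_append {α : Type*} {a b : α} (hab : a ≠ b) :
    ∀ (u u' v v' : List α), u ++ a :: v = u' ++ b :: v' → a ∈ u' ∨ b ∈ u := by
  intro u
  induction u with
  | nil =>
    intro u' v v' h
    match u' with
    | [] => simp only [List.nil_append, List.cons.injEq] at h; exact absurd h.1 hab
    | c :: u' =>
      left
      have : a = c := by simpa using congrArg (·.head?) h
      simp [this]
  | cons c u ih =>
    intro u' v v' h
    match u' with
    | [] =>
      right
      have : c = b := by simpa using congrArg (·.head?) h
      simp [this]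
    | d :: u' =>
      simp only [List.cons_append, List.cons.injEq] at h
      rcases ih u' v v' h.2 with h' | h'
      · exact Or.inl (List.mem_cons_of_mem _ h')
      · exact Or.inr (List.mem_cons_of_mem _ h')

/-- lemma 3: two distinct initial letters are adjacent -/
lemma adj_of_init_init {a b : Fin n} (hab : a ≠ b) {m : TM G}
    (ha : Init G a m) (hb : Init G b m) : G.Adj a b := by
  induction m using Quot.ind with
  | _ l =>
    obtain ⟨u, v, rfl, hadj⟩ := good_of_init G ha
    obtain ⟨u', v', he, hadj'⟩ := good_of_init G hb
    rcases mem_or_mem_of_append hab u u' v v' he with h | h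
    · exact (hadj' a h).symm
    · exact hadj b h


def preFold (l : List (Fin n)) (m : TM G) : TM G := l.foldr (pre G) m

@[simp] lemma preFold_nil (m : TM G) : preFold G [] m = m := rfl
@[simp] lemma preFold_cons (a : Fin n) (l : List (Fin n)) (m : TM G) :
    preFold G (a :: l) m = pre G a (preFold G l m) := rfl

def eraseFold (l : List (Fin n)) (m : TM G) : TM G := l.foldl (fun x a => eraseT G a x) m

@[simp] lemma eraseFold_nil (m : TM G) : eraseFold G [] m = m := rfl
@[simp] lemma eraseFold_cons (a : Fin n) (l : List (Fin n)) (m : TM G) :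
    eraseFold G (a :: l) m = eraseFold G l (eraseT G a m) := rfl

lemma wt_preFold (p : Fin n → ℕ) (l : List (Fin n)) (m : TM G) :
    wt G p (preFold G l m) = (l.map p).sum + wt G p m := by
  induction l with
  | nil => simp
  | cons a l ih => simp [ih]; omega

lemma eraseFold_preFold (l : List (Fin n)) (m : TM G) :
    eraseFold G l (preFold G l m) = m := by
  induction l with
  | nil => rfl
  | cons a l ih => simp [ih]

lemma init_preFold {l : List (Fin n)} (hl : l.Pairwise G.Adj) {a : Fin n}
    (ha : a ∈ l) (m : TM G) : Init G a (preFold G l m) := by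
  induction l with
  | nil => cases ha
  | cons c l ih =>
    rcases List.mem_cons.mp ha with rfl | ha'
    · exact ⟨preFold G l m, rfl⟩
    · obtain ⟨m', hm'⟩ := ih (List.Pairwise.of_cons hl) ha'
      refine ⟨pre G c m', ?_⟩
      rw [preFold_cons, hm', pre_pre G ((List.pairwise_cons.mp hl).1 a ha').symm]

lemma preFold_eraseFold {l : List (Fin n)} (hnd : l.Nodup) {m : TM G}
    (h : ∀ a ∈ l, Init G a m) : preFold G l (eraseFold G l m) = m := by
  induction l generalizing m with
  | nil => rfl
  | cons a l ih =>
    have ha : Init G a m := h a List.mem_cons_self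
    have hm : pre G a (eraseT G a m) = m := pre_eraseT_of_init G ha
    have hrest : ∀ b ∈ l, Init G b (eraseT G a m) := by
      intro b hb
      have hba : b ≠ a := fun e => (List.nodup_cons.mp hnd).1 (e ▸ hb)
      have : Init G b (pre G a (eraseT G a m)) := by
        rw [hm]; exact h b (List.mem_cons_of_mem _ hb)
      exact init_pre_iff G hba _ this
    rw [eraseFold_cons, preFold_cons, ih (List.nodup_cons.mp hnd).2 hrest, hm]

lemma letters_eq_zero_iff {m : TM G} : letters G m = 0 ↔ m = mk G [] := by
  induction m using Quot.ind with
  | _ l =>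
    show (l : Multiset (Fin n)) = 0 ↔ _
    rw [Multiset.coe_eq_zero]
    constructor
    · rintro rfl; rfl
    · intro h
      have h2 : (l : Multiset (Fin n)) = ((([] : List (Fin n))) : Multiset (Fin n)) :=
        congrArg (letters G) h
      exact (Multiset.coe_eq_coe.mp h2).eq_nil

lemma wt_eq_zero_iff {p : Fin n → ℕ} (hp : ∀ i, 0 < p i) {m : TM G} :
    wt G p m = 0 ↔ m = mk G [] := by
  rw [← letters_eq_zero_iff G]
  constructor
  · intro h
    by_contra hne
    obtain ⟨b, hb⟩ := Multiset.exists_mem_of_ne_zero hne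
    have h1 : p b ∈ (letters G m).map p := Multiset.mem_map_of_mem _ hb
    have h2 : p b ≤ wt G p m := Multiset.single_le_sum (fun x _ => Nat.zero_le x) _ h1
    have h3 := hp b
    omega
  · intro h; rw [wt, h]; simp

lemma exists_init_of_ne_nil {m : TM G} (h : m ≠ mk G []) : ∃ a, Init G a m := by
  induction m using Quot.ind with
  | _ l =>
    match l with
    | [] => exact absurd rfl h
    | a :: u => exact ⟨a, Quot.mk _ u, rfl⟩

lemma not_init_nil (a : Fin n) : ¬ Init G a (mk G []) := by
  rintro ⟨m', hm'⟩
  have := congrArg (letters G) hm'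
  simp only [letters_mk, letters_pre] at this
  exact absurd this.symm (Multiset.cons_ne_zero)

lemma finite_wt (p : Fin n → ℕ) (hp : ∀ i, 0 < p i) (d : ℕ) :
    Finite {m : TM G // wt G p m = d} := by
  have hW : {l : List (Fin n) | (l.map p).sum = d}.Finite := by
    apply (List.finite_length_le (Fin n) d).subset
    intro l hl
    simp only [Set.mem_setOf_eq] at hl ⊢
    calc l.length = (l.map p).length := (List.length_map _).symm
    _ ≤ (l.map p).sum := List.length_le_sum_of_one_le _ (by
        intro i hi
        obtain ⟨b, _, rfl⟩ := List.mem_map.mp hi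
        exact hp b)
    _ = d := hl
  haveI : Finite {l : List (Fin n) // (l.map p).sum = d} := hW.to_subtype
  apply Finite.of_surjective
    (fun l : {l : List (Fin n) // (l.map p).sum = d} => (⟨mk G l.1, by simp [l.2]⟩ :
      {m : TM G // wt G p m = d}))
  rintro ⟨m, hm⟩
  obtain ⟨l, rfl⟩ := Quot.exists_rep m
  exact ⟨⟨l, by rw [← wt_mk]; exact hm⟩, rfl⟩

end CF


namespace CF

section Alg

variable {n : ℕ} (G : SimpleGraph (Fin n)) (k : Type*) [Field k]
  (q : Sym2 (Fin n) → ZMod 2)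

lemma key_pow (x y : ZMod 2) :
    (-1 : k) ^ x.val * (-1 : k) ^ y.val = (-1 : k) ^ ((x + y).val) := by
  rw [← pow_add, ZMod.val_add, neg_one_pow_eq_pow_mod_two (n := x.val + y.val)]

noncomputable def csign (a : Fin n) (m : TM G) : ZMod 2 :=
  ((letters G m).map (fun b => if G.Adj a b ∧ b < a then q s(a, b) else 0)).sum

@[simp] lemma csign_pre (a c : Fin n) (m : TM G) :
    csign G q a (pre G c m) =
      (if G.Adj a c ∧ c < a then q s(a, c) else 0) + csign G q a m := by
  simp [csign]

noncomputable def Ta (a : Fin n) : (TM G →₀ k) →ₗ[k] (TM G →₀ k) :=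
  Finsupp.lsum k fun m => ((-1 : k) ^ (csign G q a m).val) • Finsupp.lsingle (pre G a m)

lemma Ta_single (a : Fin n) (m : TM G) (x : k) :
    Ta G k q a (Finsupp.single m x) =
      ((-1 : k) ^ (csign G q a m).val) • Finsupp.single (pre G a m) x := by
  simp [Ta]

lemma Ta_comm {a b : Fin n} (hab : G.Adj a b) :
    Ta G k q a ∘ₗ Ta G k q b
      = ((-1 : k) ^ (q s(a, b)).val) • (Ta G k q b ∘ₗ Ta G k q a) := by
  apply Finsupp.lhom_ext
  intro m x
  simp only [LinearMap.comp_apply, LinearMap.smul_apply, Ta_single, map_smul, smul_smul,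
    csign_pre]
  rw [pre_pre G hab]
  have hne : a ≠ b := hab.ne
  have hsym : s(b, a) = s(a, b) := Sym2.eq_swap
  have hE : csign G q b m + ((if G.Adj a b ∧ b < a then q s(a, b) else 0) + csign G q a m)
      = q s(a, b) + (csign G q a m + ((if G.Adj b a ∧ a < b then q s(b, a) else 0)
          + csign G q b m)) := by
    rcases lt_or_gt_of_ne hne with h | h
    · have e1 : ¬ (G.Adj a b ∧ b < a) := by rintro ⟨-, h'⟩; exact absurd h (not_lt.mpr h'.le)
      have e2 : (G.Adj b a ∧ a < b) := ⟨hab.symm, h⟩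
      rw [if_neg e1, if_pos e2, hsym]
      generalize q s(a, b) = X
      generalize csign G q a m = Y
      generalize csign G q b m = Z
      revert X Y Z; decide
    · have e1 : (G.Adj a b ∧ b < a) := ⟨hab, h⟩
      have e2 : ¬ (G.Adj b a ∧ a < b) := by rintro ⟨-, h'⟩; exact absurd h (not_lt.mpr h'.le)
      rw [if_pos e1, if_neg e2]
      generalize q s(a, b) = X
      generalize csign G q a m = Y
      generalize csign G q b m = Z
      revert X Y Z; decide
  rw [key_pow, key_pow, key_pow, hE]

noncomputable def rho : FreeAlgebra k (Fin n) →ₐ[k] Module.End k (TM G →₀ k) :=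
  FreeAlgebra.lift k fun a => Ta G k q a

lemma rho_rel {x y : FreeAlgebra k (Fin n)} (h : signedRel k G q x y) :
    rho G k q x = rho G k q y := by
  obtain ⟨a, b, hab, rfl, rfl⟩ := h
  rw [map_smul, map_mul, map_mul]
  show rho G k q (FreeAlgebra.ι k a) * rho G k q (FreeAlgebra.ι k b) = _
  rw [rho, FreeAlgebra.lift_ι_apply, FreeAlgebra.lift_ι_apply]
  rw [show (Ta G k q a * Ta G k q b : Module.End k (TM G →₀ k)) = Ta G k q a ∘ₗ Ta G k q b
      from rfl,
    show (Ta G k q b * Ta G k q a : Module.End k (TM G →₀ k)) = Ta G k q b ∘ₗ Ta G k q a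
      from rfl]
  exact Ta_comm G k q hab

noncomputable def rhoBar : RingQuot (signedRel k G q) →ₐ[k] Module.End k (TM G →₀ k) :=
  RingQuot.liftAlgHom k ⟨rho G k q, fun _ _ h => rho_rel G k q h⟩

/-- the word monomial in the free algebra -/
def word (l : List (Fin n)) : FreeAlgebra k (Fin n) := (l.map (FreeAlgebra.ι k)).prod

@[simp] lemma word_nil : word k ([] : List (Fin n)) = 1 := rfl

lemma word_cons (a : Fin n) (l : List (Fin n)) :
    word k (a :: l) = FreeAlgebra.ι k a * word k l := by
  simp [word]

lemma word_append (u v : List (Fin n)) : word k (u ++ v) = word k u * word k v := by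
  simp [word]

/-- the accumulated sign of a word -/
noncomputable def phi : List (Fin n) → ZMod 2
  | [] => 0
  | a :: u => csign G q a (mk G u) + phi u

lemma rho_word_apply (l : List (Fin n)) :
    rho G k q (word k l) (Finsupp.single (mk G []) (1 : k)) =
      ((-1 : k) ^ (phi G q l).val) • Finsupp.single (mk G l) 1 := by
  induction l with
  | nil => simp [phi]
  | cons a u ih =>
    rw [word_cons, map_mul]
    show rho G k q (FreeAlgebra.ι k a) (rho G k q (word k u) _) = _
    rw [ih, rho, FreeAlgebra.lift_ι_apply, map_smul, Ta_single, smul_smul, key_pow, add_comm]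
    rfl

end Alg

end CF


namespace CF

section Alg2

variable {n : ℕ} (G : SimpleGraph (Fin n)) (k : Type*) [Field k]
  (q : Sym2 (Fin n) → ZMod 2)

lemma isUnit_sign (v : ℕ) : IsUnit ((-1 : k) ^ v) := (isUnit_one.neg).pow v

noncomputable def Lmap : RingQuot (signedRel k G q) →ₗ[k] (TM G →₀ k) where
  toFun x := rhoBar G k q x (Finsupp.single (mk G []) 1)
  map_add' x y := by simp [map_add]
  map_smul' c x := by simp [map_smul]

lemma Lmap_word (l : List (Fin n)) :
    Lmap G k q (RingQuot.mkAlgHom k (signedRel k G q) (word k l)) =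
      ((-1 : k) ^ (phi G q l).val) • Finsupp.single (mk G l) 1 := by
  show rhoBar G k q (RingQuot.mkAlgHom k (signedRel k G q) (word k l)) _ = _
  rw [rhoBar, RingQuot.liftAlgHom_mkAlgHom_apply]
  exact rho_word_apply G k q l

lemma span_swap {w w' : List (Fin n)} (h : swapRel G w w') :
    (k ∙ (RingQuot.mkAlgHom k (signedRel k G q) (word k w)))
      = k ∙ (RingQuot.mkAlgHom k (signedRel k G q) (word k w')) := by
  obtain ⟨u, a, b, v, hab, rfl, rfl⟩ := h
  have h2 : RingQuot.mkAlgHom k (signedRel k G q) (FreeAlgebra.ι k a * FreeAlgebra.ι k b)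
      = ((-1 : k) ^ (q s(a, b)).val) •
        RingQuot.mkAlgHom k (signedRel k G q) (FreeAlgebra.ι k b * FreeAlgebra.ι k a) := by
    have := RingQuot.mkAlgHom_rel k (s := signedRel k G q)
      (⟨a, b, hab, rfl, rfl⟩ : signedRel k G q _ _)
    rw [this, map_smul]
  have e : word k (u ++ a :: b :: v)
      = word k u * ((FreeAlgebra.ι k a * FreeAlgebra.ι k b) * word k v) := by
    simp [word, mul_assoc]
  have e' : word k (u ++ b :: a :: v)
      = word k u * ((FreeAlgebra.ι k b * FreeAlgebra.ι k a) * word k v) := by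
    simp [word, mul_assoc]
  have h2' : RingQuot.mkAlgHom k (signedRel k G q) (FreeAlgebra.ι k a)
      * RingQuot.mkAlgHom k (signedRel k G q) (FreeAlgebra.ι k b)
      = ((-1 : k) ^ (q s(a, b)).val) •
        (RingQuot.mkAlgHom k (signedRel k G q) (FreeAlgebra.ι k b)
          * RingQuot.mkAlgHom k (signedRel k G q) (FreeAlgebra.ι k a)) := by
    rw [← map_mul, ← map_mul]; exact h2
  have h3 : RingQuot.mkAlgHom k (signedRel k G q) (word k (u ++ a :: b :: v))
      = ((-1 : k) ^ (q s(a, b)).val) •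
        RingQuot.mkAlgHom k (signedRel k G q) (word k (u ++ b :: a :: v)) := by
    rw [e, e']
    simp only [map_mul]
    rw [h2', smul_mul_assoc, mul_smul_comm]
  rw [h3, Submodule.span_singleton_smul_eq (isUnit_sign k _)]

noncomputable def spanF : TM G → Submodule k (RingQuot (signedRel k G q)) :=
  Quot.lift (fun l => k ∙ (RingQuot.mkAlgHom k (signedRel k G q) (word k l)))
    (fun _ _ h => span_swap G k q h)

lemma spanF_mk (l : List (Fin n)) :
    spanF G k q (mk G l) = k ∙ (RingQuot.mkAlgHom k (signedRel k G q) (word k l)) := rfl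

theorem finrank_degCompR (p : Fin n → ℕ) (hp : ∀ i, 0 < p i) (d : ℕ) :
    Module.finrank k (degCompR k (signedRel k G q) p d)
      = Nat.card {m : TM G // wt G p m = d} := by
  haveI : Finite {m : TM G // wt G p m = d} := finite_wt G p hp d
  haveI : Fintype {m : TM G // wt G p m = d} := Fintype.ofFinite _
  set A := RingQuot (signedRel k G q)
  set mkA := RingQuot.mkAlgHom k (signedRel k G q) with hmkA
  -- the finite "normal form" spanning family
  set f : {m : TM G // wt G p m = d} → A := fun m => mkA (word k (Quot.out m.1)) with hf
  have hwtout : ∀ m : {m : TM G // wt G p m = d}, ((Quot.out m.1).map p).sum = d := by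
    intro m
    have h1 : mk G (Quot.out m.1) = m.1 := Quot.out_eq m.1
    have := congrArg (wt G p) h1
    rw [wt_mk] at this
    rw [this, m.2]
  -- upper bound
  have hle : degCompR k (signedRel k G q) p d ≤ Submodule.span k (Set.range f) := by
    rw [degCompR, Submodule.span_le]
    rintro a ⟨l, hl, rfl⟩
    have h1 : mkA (word k l) ∈ spanF G k q (mk G l) :=
      Submodule.mem_span_singleton_self _
    have h2 : spanF G k q (mk G l) = k ∙ (mkA (word k (Quot.out (mk G l)))) := by
      conv_lhs => rw [← Quot.out_eq (mk G l)]
      rfl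
    rw [h2] at h1
    have hm : wt G p (mk G l) = d := by rw [wt_mk]; exact hl
    have h3 : (k ∙ (mkA (word k (Quot.out (mk G l)))))
        ≤ Submodule.span k (Set.range f) := by
      apply Submodule.span_mono
      rintro x hx
      rw [Set.mem_singleton_iff] at hx
      exact ⟨⟨mk G l, hm⟩, hx.symm⟩
    exact (SetLike.le_def.mp h3) h1
  haveI hfd1 : FiniteDimensional k (Submodule.span k (Set.range f)) :=
    FiniteDimensional.span_of_finite k (Set.finite_range f)
  haveI hfd : FiniteDimensional k (degCompR k (signedRel k G q) p d) :=
    Submodule.finiteDimensional_of_le hle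
  have hupper : Module.finrank k (degCompR k (signedRel k G q) p d)
      ≤ Fintype.card {m : TM G // wt G p m = d} := by
    refine (Submodule.finrank_mono hle).trans ?_
    haveI : Fintype ↥(Set.range f) := (Set.finite_range f).fintype
    refine (finrank_span_le_card _).trans ?_
    rw [Set.toFinset_card]
    exact Fintype.card_range_le f
  -- lower bound
  set g : {m : TM G // wt G p m = d} → (TM G →₀ k) := fun m => Finsupp.single m.1 1 with hg
  have hgind : LinearIndependent k g := by
    have h1 := (Finsupp.basisSingleOne (R := k) (ι := TM G)).linearIndependent.comp
      (fun m : {m : TM G // wt G p m = d} => m.1) Subtype.val_injective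
    rwa [Finsupp.coe_basisSingleOne] at h1
  have hsg : Submodule.span k (Set.range g)
      ≤ Submodule.map (Lmap G k q) (degCompR k (signedRel k G q) p d) := by
    rw [Submodule.span_le]
    rintro x ⟨m, rfl⟩
    have hmem : mkA (word k (Quot.out m.1)) ∈ degCompR k (signedRel k G q) p d :=
      Submodule.subset_span ⟨Quot.out m.1, hwtout m, rfl⟩
    have himg : Lmap G k q (mkA (word k (Quot.out m.1)))
        = ((-1 : k) ^ (phi G q (Quot.out m.1)).val) • Finsupp.single m.1 1 := by
      rw [hmkA, Lmap_word]
      congr 2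
      exact Quot.out_eq m.1
    have : g m = ((-1 : k) ^ (phi G q (Quot.out m.1)).val)⁻¹ •
        Lmap G k q (mkA (word k (Quot.out m.1))) := by
      rw [himg, smul_smul, inv_mul_cancel₀ ((isUnit_sign k _).ne_zero), one_smul]
    rw [this]
    exact Submodule.smul_mem _ _ (Submodule.mem_map_of_mem hmem)
  have hlower : Fintype.card {m : TM G // wt G p m = d}
      ≤ Module.finrank k (degCompR k (signedRel k G q) p d) := by
    haveI : FiniteDimensional k
        (Submodule.map (Lmap G k q) (degCompR k (signedRel k G q) p d)) :=
      Module.Finite.map _ _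
    calc Fintype.card {m : TM G // wt G p m = d}
        = Module.finrank k (Submodule.span k (Set.range g)) :=
          (finrank_span_eq_card hgind).symm
      _ ≤ Module.finrank k
            (Submodule.map (Lmap G k q) (degCompR k (signedRel k G q) p d)) :=
          Submodule.finrank_mono hsg
      _ ≤ Module.finrank k (degCompR k (signedRel k G q) p d) :=
          Submodule.finrank_map_le _ _
  rw [Nat.card_eq_fintype_card]
  omega

end Alg2

end CF


namespace CF

section Count

variable {n : ℕ} (G : SimpleGraph (Fin n)) (p : Fin n → ℕ)

noncomputable def InitF (m : TM G) : Finset (Fin n) :=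
  Finset.univ.filter (fun a => Init G a m)

lemma mem_InitF {a : Fin n} {m : TM G} : a ∈ InitF G m ↔ Init G a m := by
  simp [InitF]

lemma sigma_sub_ext {α β : Type*} {P : α → Prop} {Q : {a // P a} → β → Prop}
    (x y : Σ a : {a // P a}, {b // Q a b}) (h1 : x.1.1 = y.1.1) (h2 : x.2.1 = y.2.1) :
    x = y := by
  obtain ⟨⟨a, ha⟩, ⟨b, hb⟩⟩ := x
  obtain ⟨⟨a', ha'⟩, ⟨b', hb'⟩⟩ := y
  dsimp at h1 h2
  subst h1
  subst h2
  rfl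

lemma toList_pairwise {S : Finset (Fin n)} (hS : G.IsClique (S : Set (Fin n))) :
    S.toList.Pairwise G.Adj := by
  refine (Finset.nodup_toList S).imp_of_mem ?_
  intro a b ha hb hne
  exact hS (by simpa using Finset.mem_toList.mp ha) (by simpa using Finset.mem_toList.mp hb) hne

noncomputable def fwdE (N : ℕ)
    (x : Σ S : {S : Finset (Fin n) // G.IsClique (S : Set (Fin n))},
        {m : TM G // (∑ i ∈ S.1, p i) + wt G p m = N}) :
    Σ m : {m : TM G // wt G p m = N},
      {T : Finset (Fin n) // T ∈ (InitF G m.1).powerset} :=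
  ⟨⟨preFold G x.1.1.toList x.2.1, by
      rw [wt_preFold, Finset.sum_map_toList]; exact x.2.2⟩,
    ⟨x.1.1, by
      rw [Finset.mem_powerset]
      intro a ha
      rw [mem_InitF]
      exact init_preFold G (toList_pairwise G x.1.2) (Finset.mem_toList.mpr ha) x.2.1⟩⟩

noncomputable def bwdE (N : ℕ)
    (y : Σ m : {m : TM G // wt G p m = N},
        {T : Finset (Fin n) // T ∈ (InitF G m.1).powerset}) :
    Σ S : {S : Finset (Fin n) // G.IsClique (S : Set (Fin n))},
      {m : TM G // (∑ i ∈ S.1, p i) + wt G p m = N} :=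
  ⟨⟨y.2.1, by
      intro a ha b hb hne
      exact adj_of_init_init G hne
        ((mem_InitF G).mp (Finset.mem_powerset.mp y.2.2 (by simpa using ha)))
        ((mem_InitF G).mp (Finset.mem_powerset.mp y.2.2 (by simpa using hb)))⟩,
    ⟨eraseFold G y.2.1.toList y.1.1, by
      have hInit : ∀ a ∈ y.2.1.toList, Init G a y.1.1 := fun a ha =>
        (mem_InitF G).mp (Finset.mem_powerset.mp y.2.2 (Finset.mem_toList.mp ha))
      have hpre : preFold G y.2.1.toList (eraseFold G y.2.1.toList y.1.1) = y.1.1 :=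
        preFold_eraseFold G (Finset.nodup_toList _) hInit
      have h2 := congrArg (wt G p) hpre
      rw [wt_preFold, Finset.sum_map_toList] at h2
      rw [h2, y.1.2]⟩⟩

noncomputable def equivE (N : ℕ) :
    (Σ S : {S : Finset (Fin n) // G.IsClique (S : Set (Fin n))},
        {m : TM G // (∑ i ∈ S.1, p i) + wt G p m = N}) ≃
    (Σ m : {m : TM G // wt G p m = N},
        {T : Finset (Fin n) // T ∈ (InitF G m.1).powerset}) where
  toFun := fwdE G p N
  invFun := bwdE G p N
  left_inv := by
    rintro ⟨⟨S, hS⟩, ⟨m, hm⟩⟩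
    apply sigma_sub_ext
    · rfl
    · exact eraseFold_preFold G S.toList m
  right_inv := by
    rintro ⟨⟨m, hm⟩, ⟨T, hT⟩⟩
    apply sigma_sub_ext
    · refine preFold_eraseFold G (Finset.nodup_toList _) ?_
      intro a ha
      exact (mem_InitF G).mp (Finset.mem_powerset.mp hT (Finset.mem_toList.mp ha))
    · rfl

theorem count_id (hp : ∀ i, 0 < p i) (N : ℕ) :
    ∑ S ∈ (Finset.univ : Finset (Fin n)).powerset.filter
        (fun S : Finset (Fin n) => G.IsClique (S : Set (Fin n))),
      ((Nat.card {m : TM G // (∑ i ∈ S, p i) + wt G p m = N} : ℤ) * (-1) ^ S.card)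
    = if N = 0 then 1 else 0 := by
  classical
  set K := (Finset.univ : Finset (Fin n)).powerset.filter
      (fun S : Finset (Fin n) => G.IsClique (S : Set (Fin n))) with hK
  have hKmem : ∀ S : Finset (Fin n), S ∈ K ↔ G.IsClique (S : Set (Fin n)) := by
    intro S; simp [hK]
  haveI hFin : ∀ S : Finset (Fin n), Finite {m : TM G // (∑ i ∈ S, p i) + wt G p m = N} := by
    intro S
    haveI := finite_wt G p hp (N - ∑ i ∈ S, p i)
    exact Finite.of_injective
      (fun m => (⟨m.1, by have := m.2; omega⟩ :
        {m : TM G // wt G p m = N - ∑ i ∈ S, p i}))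
      (fun x y h => Subtype.ext (congrArg Subtype.val h : _))
  haveI : Finite {m : TM G // wt G p m = N} := finite_wt G p hp N
  haveI : Fintype {m : TM G // wt G p m = N} := Fintype.ofFinite _
  haveI hFT : ∀ S : Finset (Fin n), Fintype {m : TM G // (∑ i ∈ S, p i) + wt G p m = N} :=
    fun S => Fintype.ofFinite _
  haveI : Fintype {S : Finset (Fin n) // G.IsClique (S : Set (Fin n))} := Fintype.ofFinite _
  haveI hFT2 : ∀ S : {S : Finset (Fin n) // G.IsClique (S : Set (Fin n))},
      Fintype {m : TM G // (∑ i ∈ S.1, p i) + wt G p m = N} := fun S => hFT S.1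
  calc ∑ S ∈ K, ((Nat.card {m : TM G // (∑ i ∈ S, p i) + wt G p m = N} : ℤ) * (-1) ^ S.card)
      = ∑ S : {S : Finset (Fin n) // S ∈ K},
          ((Nat.card {m : TM G // (∑ i ∈ S.1, p i) + wt G p m = N} : ℤ) * (-1) ^ S.1.card) :=
        (Finset.sum_coe_sort K _).symm
    _ = ∑ S : {S : Finset (Fin n) // G.IsClique (S : Set (Fin n))},
          ((Nat.card {m : TM G // (∑ i ∈ S.1, p i) + wt G p m = N} : ℤ) * (-1) ^ S.1.card) := by
        refine Fintype.sum_equiv (Equiv.subtypeEquivRight (fun S => hKmem S)) _ _ ?_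
        intro x; rfl
    _ = ∑ S : {S : Finset (Fin n) // G.IsClique (S : Set (Fin n))},
          (∑ _m : {m : TM G // (∑ i ∈ S.1, p i) + wt G p m = N}, ((-1 : ℤ) ^ S.1.card)) := by
        refine Finset.sum_congr rfl ?_
        intro S _
        rw [Finset.sum_const, Finset.card_univ, nsmul_eq_mul, Nat.card_eq_fintype_card]
    _ = ∑ x : (Σ S : {S : Finset (Fin n) // G.IsClique (S : Set (Fin n))},
          {m : TM G // (∑ i ∈ S.1, p i) + wt G p m = N}), ((-1 : ℤ) ^ x.1.1.card) := by
        rw [← Finset.univ_sigma_univ, Finset.sum_sigma]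
    _ = ∑ y : (Σ m : {m : TM G // wt G p m = N},
          {T : Finset (Fin n) // T ∈ (InitF G m.1).powerset}), ((-1 : ℤ) ^ y.2.1.card) := by
        refine Fintype.sum_equiv (equivE G p N) _ _ ?_
        intro x; rfl
    _ = ∑ m : {m : TM G // wt G p m = N},
          (∑ T ∈ (InitF G m.1).powerset, ((-1 : ℤ) ^ T.card)) := by
        rw [← Finset.univ_sigma_univ, Finset.sum_sigma]
        refine Finset.sum_congr rfl ?_
        intro m _
        exact Finset.sum_coe_sort ((InitF G m.1).powerset) (fun T => (-1 : ℤ) ^ T.card)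
    _ = ∑ m : {m : TM G // wt G p m = N}, (if InitF G m.1 = ∅ then (1 : ℤ) else 0) := by
        refine Finset.sum_congr rfl ?_
        intro m _
        exact Finset.sum_powerset_neg_one_pow_card
    _ = if N = 0 then 1 else 0 := by
        by_cases hN : N = 0
        · subst hN
          have hz : ∀ m : {m : TM G // wt G p m = 0}, InitF G m.1 = ∅ := by
            intro m
            have hm : m.1 = mk G [] := (wt_eq_zero_iff G hp).mp m.2
            rw [Finset.eq_empty_iff_forall_notMem]
            intro a ha
            exact not_init_nil G a (by rw [← hm]; exact (mem_InitF G).mp ha)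
          have hcard : Fintype.card {m : TM G // wt G p m = 0} = 1 :=
            Fintype.card_eq_one_iff.mpr ⟨⟨mk G [], by simp⟩,
              fun y => Subtype.ext ((wt_eq_zero_iff G hp).mp y.2)⟩
          rw [Finset.sum_congr rfl (fun m _ => by rw [hz m, if_pos rfl])]
          rw [Finset.sum_const, Finset.card_univ, hcard, if_pos rfl]
          simp
        · have hz : ∀ m : {m : TM G // wt G p m = N}, ¬ (InitF G m.1 = ∅) := by
            intro m he
            have hne : m.1 ≠ mk G [] := by
              intro h
              apply hN
              rw [← m.2, h, wt_mk]
              simp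
            obtain ⟨a, ha⟩ := exists_init_of_ne_nil G hne
            have : a ∈ InitF G m.1 := (mem_InitF G).mpr ha
            rw [he] at this
            exact absurd this (Finset.notMem_empty a)
          rw [Finset.sum_congr rfl (fun m _ => by rw [if_neg (hz m)]), if_neg hN]
          simp
end Count

end CF

/-- **Main theorem (generalized).** For any finite simple graph with positive
integer vertex weights `p` and edge weights `q : E → ℤ/2`, the graded algebra
`A = k⟨x_i⟩/(x_a x_b − (−1)^{q(ab)} x_b x_a : ab ∈ E)` has Hilbert series the
inverse of the clique polynomial `c_Γ(z)`; in particular it is independent of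
the choice of the `q`'s. -/
theorem stmt_6 (k : Type*) [Field k] (hchar : ringChar k ≠ 2) {n : ℕ}
    (G : SimpleGraph (Fin n)) (p : Fin n → ℕ) (hp : ∀ i, 0 < p i)
    (q : Sym2 (Fin n) → ZMod 2) :
    hilbertSeriesR k (signedRel k G q) p * cliquePoly G p = 1 := by
  classical
  ext N
  rw [PowerSeries.coeff_mul, PowerSeries.coeff_one]
  set K := (Finset.univ : Finset (Fin n)).powerset.filter
      (fun S : Finset (Fin n) => G.IsClique (S : Set (Fin n))) with hK
  set t : ℕ → ℤ := fun d => (Nat.card {m : CF.TM G // CF.wt G p m = d} : ℤ) with ht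
  have hH : ∀ d : ℕ, (PowerSeries.coeff d) (hilbertSeriesR k (signedRel k G q) p) = t d := by
    intro d
    rw [hilbertSeriesR, PowerSeries.coeff_mk, CF.finrank_degCompR G k q p hp d]
  have hC : ∀ j : ℕ, (PowerSeries.coeff j) (cliquePoly G p)
      = ∑ S ∈ K, (if (∑ i ∈ S, p i) = j then (-1 : ℤ) ^ S.card else 0) := by
    intro j; rw [cliquePoly, PowerSeries.coeff_mk]
  calc ∑ ij ∈ Finset.HasAntidiagonal.antidiagonal N,
        (PowerSeries.coeff ij.1) (hilbertSeriesR k (signedRel k G q) p) *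
          (PowerSeries.coeff ij.2) (cliquePoly G p)
      = ∑ ij ∈ Finset.HasAntidiagonal.antidiagonal N, ∑ S ∈ K,
          (if (∑ i ∈ S, p i) = ij.2 then t ij.1 * (-1 : ℤ) ^ S.card else 0) := by
        refine Finset.sum_congr rfl ?_
        intro ij _
        rw [hH, hC, Finset.mul_sum]
        refine Finset.sum_congr rfl ?_
        intro S _
        rw [mul_ite, mul_zero]
    _ = ∑ S ∈ K, ∑ ij ∈ Finset.HasAntidiagonal.antidiagonal N,
          (if (∑ i ∈ S, p i) = ij.2 then t ij.1 * (-1 : ℤ) ^ S.card else 0) :=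
        Finset.sum_comm
    _ = ∑ S ∈ K, ((Nat.card {m : CF.TM G // (∑ i ∈ S, p i) + CF.wt G p m = N} : ℤ)
          * (-1) ^ S.card) := by
        refine Finset.sum_congr rfl ?_
        intro S _
        rw [Finset.Nat.sum_antidiagonal_eq_sum_range_succ_mk]
        by_cases hw : (∑ i ∈ S, p i) ≤ N
        · have hiff : ∀ d ∈ Finset.range (N + 1),
              (((∑ i ∈ S, p i) = N - d) ↔ (d = N - (∑ i ∈ S, p i))) := by
            intro d hd
            rw [Finset.mem_range] at hd
            omega
          rw [Finset.sum_congr rfl (fun d hd => by rw [if_congr (hiff d hd) rfl rfl])]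
          rw [Finset.sum_ite_eq' (Finset.range (N + 1)) (N - (∑ i ∈ S, p i))
            (fun d => t d * (-1 : ℤ) ^ S.card)]
          rw [if_pos (by rw [Finset.mem_range]; omega)]
          congr 1
          rw [ht]
          norm_num
          rw [Nat.card_congr (Equiv.subtypeEquivRight (fun m => ?_))]
          constructor <;> (intro h; omega)
        · have h1 : ∀ d ∈ Finset.range (N + 1), ¬ ((∑ i ∈ S, p i) = N - d) := by
            intro d hd
            rw [Finset.mem_range] at hd
            omega
          rw [Finset.sum_congr rfl (fun d hd => if_neg (h1 d hd)), Finset.sum_const_zero]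
          haveI : IsEmpty {m : CF.TM G // (∑ i ∈ S, p i) + CF.wt G p m = N} :=
            ⟨fun m => by have := m.2; omega⟩
          rw [Nat.card_of_isEmpty]
          simp
    _ = if N = 0 then 1 else 0 := CF.count_id G p hp N
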